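/- For every natural number m ≥ 1, the supremum over θ ∈ ℝ of r(θ) = (1+cos θ)^m + (1+sin θ)^m satisfies sup_θ r(θ) ≤ 2^m + 1 + 8m/2^{m+1}. -/
import Mathlib

open Real

private lemma L1 (s : ℝ) (hs : 0 ≤ s) : ∀ n : ℕ, (1+s)^(n+1) ≤ 1 + ((n:ℝ)+1)*s*(1+s)^n := by
  intro n
  induction n with
  | zero => norm_num
  | succ n ih =>
    have h1 : (0:ℝ) ≤ 1+s := by linarith
    have hp : (1:ℝ) ≤ (1+s)^(n+1) := one_le_pow₀ (by linarith)
    have step : (1+s)^(n+1+1) ≤ 1 + (((n:ℝ)+1)+1)*s*(1+s)^(n+1) := by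
      calc (1+s)^(n+1+1) = (1+s)*(1+s)^(n+1) := by ring
        _ ≤ (1+s)*(1 + ((n:ℝ)+1)*s*(1+s)^n) := by
            refine mul_le_mul_of_nonneg_left ih h1
        _ = 1 + s + ((n:ℝ)+1)*s*(1+s)^(n+1) := by ring
        _ ≤ 1 + s*(1+s)^(n+1) + ((n:ℝ)+1)*s*(1+s)^(n+1) := by nlinarith
        _ = 1 + (((n:ℝ)+1)+1)*s*(1+s)^(n+1) := by ring
    have ecast : ((n+1:ℕ):ℝ) + 1 = ((n:ℝ)+1)+1 := by push_cast; ring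
    rw [ecast]
    exact step

private lemma L2 (d : ℝ) (hd : 0 ≤ d) (hd2 : d ≤ 2) :
    ∀ n : ℕ, (2-d)^(n+1) + ((n:ℝ)+1)*d*(2-d)^n ≤ 2^(n+1) := by
  intro n
  induction n with
  | zero => norm_num
  | succ n ih =>
    have h1 : (0:ℝ) ≤ 2-d := by linarith
    have hp : (0:ℝ) ≤ (2-d)^n := pow_nonneg h1 n
    have hnn : (0:ℝ) ≤ (n:ℝ)+1 := by positivity
    have step : (2-d)^(n+1+1) + (((n:ℝ)+1)+1)*d*(2-d)^(n+1) ≤ 2^(n+1+1) := by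
      have epow1 : (2-d)^(n+1) = (2-d)*(2-d)^n := by
        rw [pow_succ]
        ring
      have epow2 : (2-d)^(n+1+1) = (2-d)*((2-d)*(2-d)^n) := by
        rw [pow_succ, epow1]
        ring
      have h2 : (2-d)^(n+1+1) + (((n:ℝ)+1)+1)*d*(2-d)^(n+1)
          ≤ 2*((2-d)^(n+1) + ((n:ℝ)+1)*d*(2-d)^n) := by
        rw [epow1, epow2]
        nlinarith [mul_nonneg (mul_nonneg hnn (sq_nonneg d)) hp]
      calc (2-d)^(n+1+1) + (((n:ℝ)+1)+1)*d*(2-d)^(n+1)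
          ≤ 2*((2-d)^(n+1) + ((n:ℝ)+1)*d*(2-d)^n) := h2
        _ ≤ 2*2^(n+1) := by linarith
        _ = 2^(n+1+1) := by ring
    have ecast : ((n+1:ℕ):ℝ) + 1 = ((n:ℝ)+1)+1 := by push_cast; ring
    rw [ecast]
    exact step

private lemma amgm (L A B : ℝ) (hL : 0 ≤ L) (hA : 0 ≤ A) (hB : 0 ≤ B)
    (h : L^2 ≤ 4*(A*B)) : L ≤ A + B := by
  nlinarith [sq_nonneg (A-B), sq_nonneg (A+B)]

private lemma bern4 (y : ℝ) (n : ℕ) (hy : 0 ≤ y) (h : (n:ℝ)*y ≤ 3/4) : (1+y)^n ≤ 4 := by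
  rcases Nat.eq_zero_or_pos n with rfl|hn
  · norm_num
  · have hn1 : (1:ℝ) ≤ (n:ℝ) := by exact_mod_cast hn
    have hy34 : y ≤ 3/4 := by nlinarith
    have hb : (1:ℝ) - (n:ℝ)*y ≤ (1-y)^n := by
      have h2 := one_add_mul_le_pow (a := -y) (by linarith) n
      have e : (1:ℝ) + (n:ℝ)*(-y) = 1 - (n:ℝ)*y := by ring
      rw [e] at h2
      have e2 : (1:ℝ) + (-y) = 1 - y := by ring
      rw [e2] at h2
      exact h2
    have h14 : (1/4:ℝ) ≤ (1-y)^n := le_trans (by linarith) hb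
    have hprod : (1+y)^n*(1-y)^n ≤ 1 := by
      rw [← mul_pow]
      apply pow_le_one₀ (by nlinarith) (by nlinarith)
    have hpos : (0:ℝ) ≤ (1+y)^n := pow_nonneg (by linarith) n
    nlinarith [mul_le_mul_of_nonneg_left h14 hpos]

private lemma reduce (n : ℕ) (s : ℝ) (hs0 : 0 ≤ s) (h2 : s^2/2 ≤ 2)
    (hcore : s*(1+s)^n ≤ 4/2^(n+1) + (s^2/2)*(2-s^2/2)^n) :
    (1+s)^(n+1) + (2-s^2/2)^(n+1) ≤ 2^(n+1) + 1 + 4*((n:ℝ)+1)/2^(n+1) := by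
  have h1 := L1 s hs0 n
  have h2' := L2 (s^2/2) (by positivity) h2 n
  have h3 : ((n:ℝ)+1)*(s*(1+s)^n) ≤ ((n:ℝ)+1)*(4/2^(n+1) + (s^2/2)*(2-s^2/2)^n) :=
    mul_le_mul_of_nonneg_left hcore (by positivity)
  have e : ((n:ℝ)+1)*(4/2^(n+1) + (s^2/2)*(2-s^2/2)^n)
      = 4*((n:ℝ)+1)/2^(n+1) + ((n:ℝ)+1)*(s^2/2)*(2-s^2/2)^n := by ring
  rw [e] at h3
  nlinarith [h1, h2', h3]

private lemma P2core (n : ℕ) (hn : 1 ≤ n) (s : ℝ) (hs0 : 0 ≤ s)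
    (hs : s ≤ 1/(3*((n:ℝ)+1))) :
    s*(1+s)^n ≤ 4/2^(n+1) + (s^2/2)*(2-s^2/2)^n := by
  have hnR : (1:ℝ) ≤ (n:ℝ) := by exact_mod_cast hn
  have hs6 : s ≤ 1/6 := by
    refine le_trans hs ?_
    rw [div_le_div_iff₀ (by positivity) (by norm_num)]
    linarith
  have hny : (n:ℝ)*(9/4*s) ≤ 3/4 := by
    have h1 : (n:ℝ)*s ≤ (n:ℝ)*(1/(3*((n:ℝ)+1))) :=
      mul_le_mul_of_nonneg_left hs (by positivity)
    have h2 : (n:ℝ)*(1/(3*((n:ℝ)+1))) ≤ 1/3 := by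
      rw [mul_one_div, div_le_div_iff₀ (by positivity) (by norm_num)]
      linarith
    nlinarith
  have claim1 : 2*(1+s)^2 ≤ (2-s^2/2)*(1+9/4*s) := by nlinarith
  have key : (2*(1+s)^2)^n ≤ 4*(2-s^2/2)^n := by
    calc (2*(1+s)^2)^n ≤ ((2-s^2/2)*(1+9/4*s))^n :=
          pow_le_pow_left₀ (by positivity) claim1 n
      _ = (2-s^2/2)^n * (1+9/4*s)^n := mul_pow _ _ n
      _ ≤ (2-s^2/2)^n * 4 := by
          refine mul_le_mul_of_nonneg_left ?_ (pow_nonneg (by nlinarith) n)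
          exact bern4 (9/4*s) n (by positivity) hny
      _ = 4*(2-s^2/2)^n := by ring
  have hbase : (0:ℝ) ≤ 2-s^2/2 := by nlinarith
  refine amgm _ _ _ (mul_nonneg hs0 (by positivity)) (by positivity)
    (mul_nonneg (by positivity) (pow_nonneg hbase n)) ?_
  have h2n : (0:ℝ) < 2^n := by positivity
  refine le_of_mul_le_mul_right ?_ h2n
  have hkey2 : s^2*(2*(1+s)^2)^n ≤ s^2*(4*(2-s^2/2)^n) :=
    mul_le_mul_of_nonneg_left key (sq_nonneg s)
  calc (s*(1+s)^n)^2 * 2^n = s^2*(2*(1+s)^2)^n := by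
        rw [mul_pow 2 ((1+s)^2) n, mul_pow s ((1+s)^n) 2, ← pow_mul, ← pow_mul, mul_comm 2 n]
        ring
    _ ≤ s^2*(4*(2-s^2/2)^n) := hkey2
    _ = 4*(4/2^(n+1) * (s^2/2*(2-s^2/2)^n)) * 2^n := by
        rw [pow_succ]
        field_simp
        ring

private lemma claimG : ∀ n : ℕ, 10 ≤ n → (9/4:ℝ)*((n:ℝ)+1)^2 ≤ (85/48)^n := by
  intro n hn
  induction n with
  | zero => omega
  | succ k ih =>
    rcases Nat.lt_or_ge k 10 with hk|hk
    · have hk9 : k = 9 := by omega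
      subst hk9
      norm_num
    · have hkR : (10:ℝ) ≤ (k:ℝ) := by exact_mod_cast hk
      have ihh := ih hk
      have hpk : (0:ℝ) < (85/48)^k := by positivity
      have ecast : ((k+1:ℕ):ℝ) + 1 = ((k:ℝ)+1)+1 := by push_cast; ring
      rw [ecast, pow_succ (85/48:ℝ) k]
      nlinarith [ihh, hkR, sq_nonneg ((k:ℝ)-10)]

private lemma gapfill (n : ℕ) (hn : 10 ≤ n) (s : ℝ)
    (ha : 1/(3*((n:ℝ)+1)) ≤ s) (hb : s ≤ 1/8) :
    s*(1+s)^n ≤ 4/2^(n+1) + (s^2/2)*(2-s^2/2)^n := by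
  have hs0 : 0 ≤ s := le_trans (by positivity) ha
  have h4p : (0:ℝ) ≤ 4/2^(n+1) := by positivity
  have main : s*(1+s)^n ≤ (s^2/2)*(2-s^2/2)^n := by
    have e1 : s*(1+s)^n ≤ (1/8)*(9/8)^n := by
      refine mul_le_mul hb (pow_le_pow_left₀ (by linarith) (by linarith) n) ?_ (by norm_num)
      positivity
    have e2 : (1/8:ℝ)*(9/8)^n ≤ (1/(18*((n:ℝ)+1)^2)) * (255/128)^n := by
      have epow : (255/128:ℝ)^n = (85/48)^n*(9/8)^n := by
        rw [← mul_pow]; norm_num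
      rw [epow, show (1/(18*((n:ℝ)+1)^2)) * ((85/48)^n*(9/8)^n)
            = ((85/48)^n/(18*((n:ℝ)+1)^2))*(9/8)^n from by ring]
      refine mul_le_mul_of_nonneg_right ?_ (by positivity)
      rw [le_div_iff₀ (by positivity)]
      have hG := claimG n hn
      nlinarith
    have e3 : (1/(18*((n:ℝ)+1)^2)) * (255/128)^n ≤ (s^2/2)*(2-s^2/2)^n := by
      have hσ1 : (1/(18*((n:ℝ)+1)^2)) ≤ s^2/2 := by
        have h0 : (0:ℝ) ≤ 1/(3*((n:ℝ)+1)) := by positivity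
        have hsq : (1/(3*((n:ℝ)+1)))^2 ≤ s^2 := pow_le_pow_left₀ h0 ha 2
        have e : (1/(3*((n:ℝ)+1)))^2 = 1/(9*((n:ℝ)+1)^2) := by
          field_simp
          ring
        rw [e] at hsq
        have e4 : 1/(18*((n:ℝ)+1)^2) * 2 = 1/(9*((n:ℝ)+1)^2) := by
          field_simp
          ring
        nlinarith [hsq, e4]
      have hσ2 : (255/128:ℝ)^n ≤ (2-s^2/2)^n := by
        refine pow_le_pow_left₀ (by norm_num) (by nlinarith) n
      refine mul_le_mul hσ1 hσ2 (by positivity) ?_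
      positivity
    linarith
  linarith

private lemma claimP3 : ∀ n : ℕ, 10 ≤ n → (192/5:ℝ) ≤ (391/260)^n := by
  intro n hn
  have base : (192/5:ℝ) ≤ (391/260)^10 := by norm_num
  calc (192/5:ℝ) ≤ (391/260)^10 := base
    _ ≤ (391/260)^n := pow_le_pow_right₀ (by norm_num) hn

private lemma P3fix (n : ℕ) (hn : 10 ≤ n) (s : ℝ)
    (ha : 1/8 ≤ s) (hb : s ≤ 3/10) :
    s*(1+s)^n ≤ 4/2^(n+1) + (s^2/2)*(2-s^2/2)^n := by
  have hs0 : (0:ℝ) ≤ s := by linarith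
  have h4p : (0:ℝ) ≤ 4/2^(n+1) := by positivity
  have main : s*(1+s)^n ≤ (s^2/2)*(2-s^2/2)^n := by
    have e1 : s*(1+s)^n ≤ (3/10)*(13/10)^n := by
      refine mul_le_mul hb (pow_le_pow_left₀ (by linarith) (by linarith) n) ?_ (by norm_num)
      positivity
    have e2 : (3/10:ℝ)*(13/10)^n ≤ (1/128) * (391/200)^n := by
      have epow : (391/200:ℝ)^n = (391/260)^n*(13/10)^n := by
        rw [← mul_pow]; norm_num
      rw [epow, show (1/128:ℝ) * ((391/260)^n*(13/10)^n)
            = ((391/260)^n/128)*(13/10)^n from by ring]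
      refine mul_le_mul_of_nonneg_right ?_ (by positivity)
      rw [le_div_iff₀ (by positivity)]
      have hP := claimP3 n hn
      linarith
    have e3 : (1/128:ℝ) * (391/200)^n ≤ (s^2/2)*(2-s^2/2)^n := by
      have hσ1 : (1/128:ℝ) ≤ s^2/2 := by nlinarith
      have hσ2 : (391/200:ℝ)^n ≤ (2-s^2/2)^n := by
        refine pow_le_pow_left₀ (by norm_num) (by nlinarith) n
      refine mul_le_mul hσ1 hσ2 (by positivity) ?_
      positivity
    linarith
  linarith

private lemma claimD : ∀ m : ℕ, 11 ≤ m → (171/100:ℝ)^m + (391/200)^m ≤ 2^m := by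
  intro m hm
  induction m with
  | zero => omega
  | succ k ih =>
    rcases Nat.lt_or_ge k 11 with hk|hk
    · have hk10 : k = 10 := by omega
      subst hk10
      norm_num
    · have ihh := ih hk
      have h1 : (0:ℝ) ≤ (171/100:ℝ)^k := by positivity
      have h2 : (0:ℝ) < (2:ℝ)^k := by positivity
      calc (171/100:ℝ)^(k+1) + (391/200)^(k+1)
          = (171/100)*(171/100:ℝ)^k + (391/200)*(391/200)^k := by ring
        _ ≤ (391/200)*((171/100:ℝ)^k + (391/200)^k) := by nlinarith
        _ ≤ (391/200)*2^k := by nlinarith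
        _ ≤ 2^(k+1) := by rw [pow_succ]; nlinarith

private lemma III (m : ℕ) (hm : 11 ≤ m) (s : ℝ)
    (ha : 3/10 ≤ s) (hb : s ≤ 71/100) :
    (1+s)^m + (2-s^2/2)^m ≤ 2^m + 1 + 4*(m:ℝ)/2^m := by
  have e1 : (1+s)^m ≤ (171/100:ℝ)^m := pow_le_pow_left₀ (by linarith) (by linarith) m
  have e2 : (2-s^2/2)^m ≤ (391/200:ℝ)^m := by
    refine pow_le_pow_left₀ (by nlinarith) (by nlinarith) m
  have hD := claimD m hm
  have hpos : (0:ℝ) ≤ 4*(m:ℝ)/2^m := by positivity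
  linarith

private lemma istep (M : ℕ) (A B s : ℝ) (hA : 0 ≤ A) (ha : A ≤ s) (hb : s ≤ B)
    (hs2 : s^2 ≤ 1/2) :
    (1+s)^M + (2-s^2/2)^M ≤ (1+B)^M + (2-A^2/2)^M := by
  have hs0 : 0 ≤ s := le_trans hA ha
  have e1 : (1+s)^M ≤ (1+B)^M := pow_le_pow_left₀ (by linarith) (by linarith) M
  have e2 : (2-s^2/2)^M ≤ (2-A^2/2)^M := by
    refine pow_le_pow_left₀ (by linarith) (by nlinarith) M
  linarith

private lemma key2 (s : ℝ) (ha : (1/6:ℝ) ≤ s) (hb71 : s ≤ 71/100)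
    (hs2 : s^2 ≤ 1/2) :
    (1+s)^2 + (2-s^2/2)^2 ≤ 2^2 + 1 + 4*2/2^2 := by
  exact le_trans (istep 2 (1/6) (71/100) s (by norm_num) ha hb71 hs2) (by norm_num)

private lemma key3 (s : ℝ) (ha : (1/9:ℝ) ≤ s) (hb71 : s ≤ 71/100)
    (hs2 : s^2 ≤ 1/2) :
    (1+s)^3 + (2-s^2/2)^3 ≤ 2^3 + 1 + 4*3/2^3 := by
  rcases le_or_gt s (46/125) with h0u|h0
  · exact le_trans (istep 3 (1/9) (46/125) s (by norm_num) ha h0u hs2) (by norm_num)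
  rcases le_or_gt s (121/250) with h1u|h1
  · exact le_trans (istep 3 (46/125) (121/250) s (by norm_num) (le_of_lt h0) h1u hs2) (by norm_num)
  rcases le_or_gt s (561/1000) with h2u|h2
  · exact le_trans (istep 3 (121/250) (561/1000) s (by norm_num) (le_of_lt h1) h2u hs2) (by norm_num)
  rcases le_or_gt s (77/125) with h3u|h3
  · exact le_trans (istep 3 (561/1000) (77/125) s (by norm_num) (le_of_lt h2) h3u hs2) (by norm_num)
  rcases le_or_gt s (657/1000) with h4u|h4
  · exact le_trans (istep 3 (77/125) (657/1000) s (by norm_num) (le_of_lt h3) h4u hs2) (by norm_num)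
  rcases le_or_gt s (687/1000) with h5u|h5
  · exact le_trans (istep 3 (657/1000) (687/1000) s (by norm_num) (le_of_lt h4) h5u hs2) (by norm_num)
  rcases le_or_gt s (709/1000) with h6u|h6
  · exact le_trans (istep 3 (687/1000) (709/1000) s (by norm_num) (le_of_lt h5) h6u hs2) (by norm_num)
  exact le_trans (istep 3 (709/1000) (71/100) s (by norm_num) (le_of_lt h6) hb71 hs2) (by norm_num)

private lemma key4 (s : ℝ) (ha : (1/12:ℝ) ≤ s) (hb71 : s ≤ 71/100)
    (hs2 : s^2 ≤ 1/2) :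
    (1+s)^4 + (2-s^2/2)^4 ≤ 2^4 + 1 + 4*4/2^4 := by
  rcases le_or_gt s (203/1000) with h0u|h0
  · exact le_trans (istep 4 (1/12) (203/1000) s (by norm_num) ha h0u hs2) (by norm_num)
  rcases le_or_gt s (273/1000) with h1u|h1
  · exact le_trans (istep 4 (203/1000) (273/1000) s (by norm_num) (le_of_lt h0) h1u hs2) (by norm_num)
  rcases le_or_gt s (331/1000) with h2u|h2
  · exact le_trans (istep 4 (273/1000) (331/1000) s (by norm_num) (le_of_lt h1) h2u hs2) (by norm_num)
  rcases le_or_gt s (383/1000) with h3u|h3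
  · exact le_trans (istep 4 (331/1000) (383/1000) s (by norm_num) (le_of_lt h2) h3u hs2) (by norm_num)
  rcases le_or_gt s (431/1000) with h4u|h4
  · exact le_trans (istep 4 (383/1000) (431/1000) s (by norm_num) (le_of_lt h3) h4u hs2) (by norm_num)
  rcases le_or_gt s (19/40) with h5u|h5
  · exact le_trans (istep 4 (431/1000) (19/40) s (by norm_num) (le_of_lt h4) h5u hs2) (by norm_num)
  rcases le_or_gt s (129/250) with h6u|h6
  · exact le_trans (istep 4 (19/40) (129/250) s (by norm_num) (le_of_lt h5) h6u hs2) (by norm_num)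
  rcases le_or_gt s (553/1000) with h7u|h7
  · exact le_trans (istep 4 (129/250) (553/1000) s (by norm_num) (le_of_lt h6) h7u hs2) (by norm_num)
  rcases le_or_gt s (293/500) with h8u|h8
  · exact le_trans (istep 4 (553/1000) (293/500) s (by norm_num) (le_of_lt h7) h8u hs2) (by norm_num)
  rcases le_or_gt s (307/500) with h9u|h9
  · exact le_trans (istep 4 (293/500) (307/500) s (by norm_num) (le_of_lt h8) h9u hs2) (by norm_num)
  rcases le_or_gt s (637/1000) with h10u|h10
  · exact le_trans (istep 4 (307/500) (637/1000) s (by norm_num) (le_of_lt h9) h10u hs2) (by norm_num)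
  rcases le_or_gt s (82/125) with h11u|h11
  · exact le_trans (istep 4 (637/1000) (82/125) s (by norm_num) (le_of_lt h10) h11u hs2) (by norm_num)
  rcases le_or_gt s (671/1000) with h12u|h12
  · exact le_trans (istep 4 (82/125) (671/1000) s (by norm_num) (le_of_lt h11) h12u hs2) (by norm_num)
  rcases le_or_gt s (683/1000) with h13u|h13
  · exact le_trans (istep 4 (671/1000) (683/1000) s (by norm_num) (le_of_lt h12) h13u hs2) (by norm_num)
  rcases le_or_gt s (693/1000) with h14u|h14
  · exact le_trans (istep 4 (683/1000) (693/1000) s (by norm_num) (le_of_lt h13) h14u hs2) (by norm_num)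
  rcases le_or_gt s (7/10) with h15u|h15
  · exact le_trans (istep 4 (693/1000) (7/10) s (by norm_num) (le_of_lt h14) h15u hs2) (by norm_num)
  rcases le_or_gt s (353/500) with h16u|h16
  · exact le_trans (istep 4 (7/10) (353/500) s (by norm_num) (le_of_lt h15) h16u hs2) (by norm_num)
  exact le_trans (istep 4 (353/500) (71/100) s (by norm_num) (le_of_lt h16) hb71 hs2) (by norm_num)

private lemma key5 (s : ℝ) (ha : (1/15:ℝ) ≤ s) (hb71 : s ≤ 71/100)
    (hs2 : s^2 ≤ 1/2) :
    (1+s)^5 + (2-s^2/2)^5 ≤ 2^5 + 1 + 4*5/2^5 := by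
  rcases le_or_gt s (123/1000) with h0u|h0
  · exact le_trans (istep 5 (1/15) (123/1000) s (by norm_num) ha h0u hs2) (by norm_num)
  rcases le_or_gt s (171/1000) with h1u|h1
  · exact le_trans (istep 5 (123/1000) (171/1000) s (by norm_num) (le_of_lt h0) h1u hs2) (by norm_num)
  rcases le_or_gt s (28/125) with h2u|h2
  · exact le_trans (istep 5 (171/1000) (28/125) s (by norm_num) (le_of_lt h1) h2u hs2) (by norm_num)
  rcases le_or_gt s (36/125) with h3u|h3
  · exact le_trans (istep 5 (28/125) (36/125) s (by norm_num) (le_of_lt h2) h3u hs2) (by norm_num)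
  rcases le_or_gt s (183/500) with h4u|h4
  · exact le_trans (istep 5 (36/125) (183/500) s (by norm_num) (le_of_lt h3) h4u hs2) (by norm_num)
  rcases le_or_gt s (229/500) with h5u|h5
  · exact le_trans (istep 5 (183/500) (229/500) s (by norm_num) (le_of_lt h4) h5u hs2) (by norm_num)
  rcases le_or_gt s (139/250) with h6u|h6
  · exact le_trans (istep 5 (229/500) (139/250) s (by norm_num) (le_of_lt h5) h6u hs2) (by norm_num)
  rcases le_or_gt s (647/1000) with h7u|h7
  · exact le_trans (istep 5 (139/250) (647/1000) s (by norm_num) (le_of_lt h6) h7u hs2) (by norm_num)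
  exact le_trans (istep 5 (647/1000) (71/100) s (by norm_num) (le_of_lt h7) hb71 hs2) (by norm_num)

private lemma key6 (s : ℝ) (ha : (1/18:ℝ) ≤ s) (hb71 : s ≤ 71/100)
    (hs2 : s^2 ≤ 1/2) :
    (1+s)^6 + (2-s^2/2)^6 ≤ 2^6 + 1 + 4*6/2^6 := by
  rcases le_or_gt s (87/1000) with h0u|h0
  · exact le_trans (istep 6 (1/18) (87/1000) s (by norm_num) ha h0u hs2) (by norm_num)
  rcases le_or_gt s (129/1000) with h1u|h1
  · exact le_trans (istep 6 (87/1000) (129/1000) s (by norm_num) (le_of_lt h0) h1u hs2) (by norm_num)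
  rcases le_or_gt s (39/200) with h2u|h2
  · exact le_trans (istep 6 (129/1000) (39/200) s (by norm_num) (le_of_lt h1) h2u hs2) (by norm_num)
  rcases le_or_gt s (303/1000) with h3u|h3
  · exact le_trans (istep 6 (39/200) (303/1000) s (by norm_num) (le_of_lt h2) h3u hs2) (by norm_num)
  rcases le_or_gt s (229/500) with h4u|h4
  · exact le_trans (istep 6 (303/1000) (229/500) s (by norm_num) (le_of_lt h3) h4u hs2) (by norm_num)
  rcases le_or_gt s (79/125) with h5u|h5
  · exact le_trans (istep 6 (229/500) (79/125) s (by norm_num) (le_of_lt h4) h5u hs2) (by norm_num)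
  exact le_trans (istep 6 (79/125) (71/100) s (by norm_num) (le_of_lt h5) hb71 hs2) (by norm_num)

private lemma key7 (s : ℝ) (ha : (1/21:ℝ) ≤ s) (hb71 : s ≤ 71/100)
    (hs2 : s^2 ≤ 1/2) :
    (1+s)^7 + (2-s^2/2)^7 ≤ 2^7 + 1 + 4*7/2^7 := by
  rcases le_or_gt s (79/1000) with h0u|h0
  · exact le_trans (istep 7 (1/21) (79/1000) s (by norm_num) ha h0u hs2) (by norm_num)
  rcases le_or_gt s (18/125) with h1u|h1
  · exact le_trans (istep 7 (79/1000) (18/125) s (by norm_num) (le_of_lt h0) h1u hs2) (by norm_num)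
  rcases le_or_gt s (283/1000) with h2u|h2
  · exact le_trans (istep 7 (18/125) (283/1000) s (by norm_num) (le_of_lt h1) h2u hs2) (by norm_num)
  rcases le_or_gt s (51/100) with h3u|h3
  · exact le_trans (istep 7 (283/1000) (51/100) s (by norm_num) (le_of_lt h2) h3u hs2) (by norm_num)
  exact le_trans (istep 7 (51/100) (71/100) s (by norm_num) (le_of_lt h3) hb71 hs2) (by norm_num)

private lemma key8 (s : ℝ) (ha : (1/24:ℝ) ≤ s) (hb71 : s ≤ 71/100)
    (hs2 : s^2 ≤ 1/2) :
    (1+s)^8 + (2-s^2/2)^8 ≤ 2^8 + 1 + 4*8/2^8 := by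
  rcases le_or_gt s (89/1000) with h0u|h0
  · exact le_trans (istep 8 (1/24) (89/1000) s (by norm_num) ha h0u hs2) (by norm_num)
  rcases le_or_gt s (9/40) with h1u|h1
  · exact le_trans (istep 8 (89/1000) (9/40) s (by norm_num) (le_of_lt h0) h1u hs2) (by norm_num)
  rcases le_or_gt s (1/2) with h2u|h2
  · exact le_trans (istep 8 (9/40) (1/2) s (by norm_num) (le_of_lt h1) h2u hs2) (by norm_num)
  exact le_trans (istep 8 (1/2) (71/100) s (by norm_num) (le_of_lt h2) hb71 hs2) (by norm_num)

private lemma key9 (s : ℝ) (ha : (1/27:ℝ) ≤ s) (hb71 : s ≤ 71/100)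
    (hs2 : s^2 ≤ 1/2) :
    (1+s)^9 + (2-s^2/2)^9 ≤ 2^9 + 1 + 4*9/2^9 := by
  rcases le_or_gt s (14/125) with h0u|h0
  · exact le_trans (istep 9 (1/27) (14/125) s (by norm_num) ha h0u hs2) (by norm_num)
  rcases le_or_gt s (44/125) with h1u|h1
  · exact le_trans (istep 9 (14/125) (44/125) s (by norm_num) (le_of_lt h0) h1u hs2) (by norm_num)
  exact le_trans (istep 9 (44/125) (71/100) s (by norm_num) (le_of_lt h1) hb71 hs2) (by norm_num)

private lemma key10 (s : ℝ) (ha : (1/30:ℝ) ≤ s) (hb71 : s ≤ 71/100)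
    (hs2 : s^2 ≤ 1/2) :
    (1+s)^10 + (2-s^2/2)^10 ≤ 2^10 + 1 + 4*10/2^10 := by
  rcases le_or_gt s (143/1000) with h0u|h0
  · exact le_trans (istep 10 (1/30) (143/1000) s (by norm_num) ha h0u hs2) (by norm_num)
  rcases le_or_gt s (483/1000) with h1u|h1
  · exact le_trans (istep 10 (143/1000) (483/1000) s (by norm_num) (le_of_lt h0) h1u hs2) (by norm_num)
  exact le_trans (istep 10 (483/1000) (71/100) s (by norm_num) (le_of_lt h1) hb71 hs2) (by norm_num)

private lemma key (m : ℕ) (hm : 1 ≤ m) (s : ℝ) (hs0 : 0 ≤ s) (hs2 : s^2 ≤ 1/2) :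
    (1+s)^m + (2-s^2/2)^m ≤ 2^m + 1 + 4*(m:ℝ)/2^m := by
  obtain ⟨n, rfl⟩ : ∃ n, m = n+1 := ⟨m-1, by omega⟩
  have hb71 : s ≤ 71/100 := by nlinarith
  have hcast : ((n+1:ℕ):ℝ) = (n:ℝ)+1 := by push_cast; ring
  rcases Nat.eq_zero_or_pos n with rfl|hn
  · norm_num
    nlinarith
  rcases le_or_gt s (1/(3*((n:ℝ)+1))) with hsmall|hbig
  · have hcore := P2core n hn s hs0 hsmall
    have h := reduce n s hs0 (by nlinarith) hcore
    rw [hcast]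
    exact h
  · rcases le_or_gt (n+1) 10 with hm10|hm11
    · have hn9 : n ≤ 9 := by omega
      interval_cases n
      · have h := key2 s (by push_cast at hbig; linarith) hb71 hs2
        push_cast
        norm_num at h ⊢
        linarith
      · have h := key3 s (by push_cast at hbig; linarith) hb71 hs2
        push_cast
        norm_num at h ⊢
        linarith
      · have h := key4 s (by push_cast at hbig; linarith) hb71 hs2
        push_cast
        norm_num at h ⊢
        linarith
      · have h := key5 s (by push_cast at hbig; linarith) hb71 hs2
        push_cast
        norm_num at h ⊢
        linarith
      · have h := key6 s (by push_cast at hbig; linarith) hb71 hs2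
        push_cast
        norm_num at h ⊢
        linarith
      · have h := key7 s (by push_cast at hbig; linarith) hb71 hs2
        push_cast
        norm_num at h ⊢
        linarith
      · have h := key8 s (by push_cast at hbig; linarith) hb71 hs2
        push_cast
        norm_num at h ⊢
        linarith
      · have h := key9 s (by push_cast at hbig; linarith) hb71 hs2
        push_cast
        norm_num at h ⊢
        linarith
      · have h := key10 s (by push_cast at hbig; linarith) hb71 hs2
        push_cast
        norm_num at h ⊢
        linarith
    · have hn10 : 10 ≤ n := by omega
      rcases le_or_gt s (1/8) with h8|h8
      · have hcore := gapfill n hn10 s (le_of_lt hbig) h8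
        have h := reduce n s hs0 (by nlinarith) hcore
        rw [hcast]
        exact h
      · rcases le_or_gt s (3/10) with h3|h3
        · have hcore := P3fix n hn10 s (le_of_lt h8) h3
          have h := reduce n s hs0 (by nlinarith) hcore
          rw [hcast]
          exact h
        · exact III (n+1) (by omega) s (le_of_lt h3) hb71

private lemma aux (m : ℕ) (hm : 1 ≤ m) (c s : ℝ) (hpy : c^2 + s^2 = 1) (hcs : s ≤ c) :
    (1+c)^m + (1+s)^m ≤ 2^m + 1 + 4*(m:ℝ)/2^m := by
  have hc1 : c ≤ 1 := by nlinarith [sq_nonneg s]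
  have hsm1 : -1 ≤ s := by nlinarith [sq_nonneg c]
  have hpos : (0:ℝ) ≤ 4*(m:ℝ)/2^m := by positivity
  rcases le_or_gt s 0 with hs0|hs0
  · have e1 : (1+s)^m ≤ 1 := pow_le_one₀ (by linarith) (by linarith)
    have e2 : (1+c)^m ≤ 2^m := pow_le_pow_left₀ (by linarith) (by linarith) m
    linarith
  · have hc0 : (0:ℝ) ≤ c := le_trans (le_of_lt hs0) hcs
    have hs2 : s^2 ≤ 1/2 := by nlinarith
    have hsq : c^2 ≤ (1 - s^2/2)^2 := by nlinarith [sq_nonneg (s^2)]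
    have hcub : c ≤ 1 - s^2/2 := by nlinarith [hsq, hc0]
    have e2 : (1+c)^m ≤ (2-s^2/2)^m := pow_le_pow_left₀ (by linarith) (by linarith) m
    have h := key m hm s (le_of_lt hs0) hs2
    linarith

theorem stmt_3 (m : ℕ) (hm : 1 ≤ m) :
    (⨆ θ : ℝ, (1 + cos θ) ^ m + (1 + sin θ) ^ m) ≤
      2 ^ m + 1 + 8 * m / 2 ^ (m + 1) := by
  have hrw : (8*(m:ℝ)/2^(m+1)) = 4*(m:ℝ)/2^m := by
    rw [pow_succ]; ring
  rw [hrw]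
  refine ciSup_le ?_
  intro θ
  have hpy := sin_sq_add_cos_sq θ
  rcases le_total (sin θ) (cos θ) with h|h
  · exact aux m hm (cos θ) (sin θ) (by linarith) h
  · have h2 := aux m hm (sin θ) (cos θ) (by linarith) h
    linarith
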